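/- There exists a constant C_0 > 0 such that for all reals t, x, B > 0, every integer m ≥ 1 and every integer k with 1 ≤ k ≤ m, one has P(𝓛_m^{(B)}(t,x) ≥ k) ≤ (C_0 · (B·t/x²)^{1/2} · m / k²)^k. -/

import Mathlib

open MeasureTheory ProbabilityTheory Real Filter
open scoped ENNReal NNReal

noncomputable section

/-- The point preceding index `i` in the sequence `p`, with the convention that the
point preceding the first one is the origin `(0,0)`. -/
def prevPt {k : ℕ} (p : Fin k → ℝ × ℝ) (i : Fin k) : ℝ × ℝ :=
  if (i : ℕ) = 0 then (0, 0)
  else p ⟨(i : ℕ) - 1, lt_of_le_of_lt (Nat.sub_le _ _) i.isLt⟩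

/-- The entropy `Ent(Δ) = (1/2) ∑_{i=1}^k (x_i - x_{i-1})² / (t_i - t_{i-1})` of a finite
sequence of points `Δ = ((t_1,x_1),…,(t_k,x_k))`, with the convention `(t_0,x_0) = (0,0)`. -/
def entSeq {k : ℕ} (p : Fin k → ℝ × ℝ) : ℝ :=
  (1 / 2) * ∑ i : Fin k, ((p i).2 - (prevPt p i).2) ^ 2 / ((p i).1 - (prevPt p i).1)

/-- The continuous entropy-controlled LPP value: the maximal cardinality of a subset of the
given points which, ordered by strictly increasing time coordinate, has entropy at most `B`. -/
def elppC (B : ℝ) {m : ℕ} (pts : Fin m → ℝ × ℝ) : ℕ :=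
  sSup {k : ℕ | ∃ f : Fin k → Fin m, Function.Injective f ∧
    (∀ i, 0 < (pts (f i)).1) ∧ StrictMono (fun i => (pts (f i)).1) ∧
    entSeq (fun i => pts (f i)) ≤ B}


def prevR {k : ℕ} (u : Fin k → ℝ) (i : Fin k) : ℝ :=
  if (i : ℕ) = 0 then 0
  else u ⟨(i : ℕ) - 1, lt_of_le_of_lt (Nat.sub_le _ _) i.isLt⟩

lemma prevPt_fst {k : ℕ} (p : Fin k → ℝ × ℝ) (i : Fin k) :
    (prevPt p i).1 = prevR (fun j => (p j).1) i := by
  unfold prevPt prevR; split <;> rfl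

lemma prevPt_snd {k : ℕ} (p : Fin k → ℝ × ℝ) (i : Fin k) :
    (prevPt p i).2 = prevR (fun j => (p j).2) i := by
  unfold prevPt prevR; split <;> rfl

lemma sum_sub_prevR {k : ℕ} (hk : 0 < k) (u : Fin k → ℝ) :
    ∑ i, (u i - prevR u i) = u ⟨k - 1, Nat.sub_lt hk one_pos⟩ := by
  classical
  set f : ℕ → ℝ := fun j => if h : 0 < j ∧ j ≤ k then u ⟨j - 1, by omega⟩ else 0 with hf
  have hterm : ∀ i : Fin k, u i - prevR u i = f ((i : ℕ) + 1) - f (i : ℕ) := by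
    intro i
    have hik := i.isLt
    by_cases h0 : (i : ℕ) = 0
    · have h1 : f ((i : ℕ) + 1) = u i := by
        simp only [hf]
        rw [dif_pos (by omega)]
        exact congrArg u (Fin.ext (by simp))
      have h2 : f (i : ℕ) = 0 := by simp [hf, h0]
      rw [h1, h2, prevR, if_pos h0]
    · have h1 : f ((i : ℕ) + 1) = u i := by
        simp only [hf]
        rw [dif_pos (by omega)]
        exact congrArg u (Fin.ext (by simp))
      have h2 : f (i : ℕ) = u ⟨(i : ℕ) - 1, lt_of_le_of_lt (Nat.sub_le _ _) i.isLt⟩ := by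
        simp only [hf]
        rw [dif_pos (by omega)]
      rw [h1, h2, prevR, if_neg h0]
  calc ∑ i, (u i - prevR u i) = ∑ i : Fin k, (f ((i : ℕ) + 1) - f (i : ℕ)) := by
        exact Finset.sum_congr rfl fun i _ => hterm i
    _ = ∑ j ∈ Finset.range k, (f (j + 1) - f j) := Fin.sum_univ_eq_sum_range (fun j => f (j + 1) - f j) k
    _ = f k - f 0 := Finset.sum_range_sub f k
    _ = u ⟨k - 1, Nat.sub_lt hk one_pos⟩ := by
        simp only [hf]
        rw [dif_pos ⟨hk, le_refl k⟩, dif_neg (by omega)]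
        ring

/-- k^k ≤ e^k * k! -/
lemma pow_self_le_exp_pow_factorial : ∀ k : ℕ, (k : ℝ) ^ k ≤ Real.exp 1 ^ k * (Nat.factorial k : ℝ)
  | 0 => by simp
  | (k + 1) => by
    have ih := pow_self_le_exp_pow_factorial k
    rcases Nat.eq_zero_or_pos k with hk | hk
    · subst hk
      norm_num [Nat.factorial]
    have hkpos : (0 : ℝ) < k := by exact_mod_cast hk
    have key : ((k : ℝ) + 1) ^ k ≤ Real.exp 1 * (k : ℝ) ^ k := by
      have h1 : ((k : ℝ) + 1) = (k : ℝ) * (1 + 1 / k) := by field_simp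
      have h2 : (1 + 1 / (k : ℝ)) ^ k ≤ Real.exp 1 := by
        have h3 : (1 + 1 / (k : ℝ)) ≤ Real.exp (1 / k) := by
          have := Real.add_one_le_exp (1 / (k : ℝ)); linarith
        calc (1 + 1 / (k : ℝ)) ^ k ≤ Real.exp (1 / k) ^ k := by
              apply pow_le_pow_left₀ (by positivity) h3
          _ = Real.exp 1 := by
              rw [← Real.exp_nat_mul]
              congr 1; field_simp
        
      calc ((k : ℝ) + 1) ^ k = (k : ℝ) ^ k * (1 + 1 / k) ^ k := by
            rw [h1, mul_pow]
        _ ≤ (k : ℝ) ^ k * Real.exp 1 := by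
            apply mul_le_mul_of_nonneg_left h2 (by positivity)
        _ = Real.exp 1 * (k : ℝ) ^ k := by ring
    have hexp : (0:ℝ) < Real.exp 1 := Real.exp_pos 1
    calc ((k + 1 : ℕ) : ℝ) ^ (k + 1) = ((k : ℝ) + 1) * ((k : ℝ) + 1) ^ k := by
          push_cast; ring
      _ ≤ ((k : ℝ) + 1) * (Real.exp 1 * (k : ℝ) ^ k) := by
          apply mul_le_mul_of_nonneg_left key (by positivity)
      _ ≤ ((k : ℝ) + 1) * (Real.exp 1 * (Real.exp 1 ^ k * (Nat.factorial k : ℝ))) := by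
          apply mul_le_mul_of_nonneg_left _ (by positivity)
          apply mul_le_mul_of_nonneg_left ih (le_of_lt hexp)
      _ = Real.exp 1 ^ (k + 1) * (((k : ℕ) + 1 : ℝ) * (Nat.factorial k : ℝ)) := by ring
      _ = Real.exp 1 ^ (k + 1) * (Nat.factorial (k + 1) : ℝ) := by
          rw [Nat.factorial_succ]; push_cast; ring

lemma denom_pos {n : ℕ} (p : Fin n → ℝ × ℝ) (hpos : ∀ i, 0 < (p i).1)
    (hmono : StrictMono fun i => (p i).1) (i : Fin n) :
    0 < (p i).1 - (prevPt p i).1 := by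
  unfold prevPt
  split
  · simpa using hpos i
  · rename_i h0
    have hlt : (⟨(i : ℕ) - 1, lt_of_le_of_lt (Nat.sub_le _ _) i.isLt⟩ : Fin n) < i := by
      rw [Fin.lt_def]; simp; omega
    have := hmono hlt
    simp only [sub_pos]
    exact this

lemma entSeq_term_nonneg {n : ℕ} (p : Fin n → ℝ × ℝ) (hpos : ∀ i, 0 < (p i).1)
    (hmono : StrictMono fun i => (p i).1) (i : Fin n) :
    0 ≤ ((p i).2 - (prevPt p i).2) ^ 2 / ((p i).1 - (prevPt p i).1) :=
  div_nonneg (sq_nonneg _) (le_of_lt (denom_pos p hpos hmono i))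

lemma prevPt_comp_castLE {n k : ℕ} (h : k ≤ n) (p : Fin n → ℝ × ℝ) (i : Fin k) :
    prevPt (fun j => p (Fin.castLE h j)) i = prevPt p (Fin.castLE h i) := by
  unfold prevPt
  simp only [Fin.coe_castLE]
  split
  · rfl
  · exact congrArg p (Fin.ext (by simp))

lemma entSeq_comp_castLE_le {n k : ℕ} (h : k ≤ n) (p : Fin n → ℝ × ℝ)
    (hpos : ∀ i, 0 < (p i).1) (hmono : StrictMono fun i => (p i).1) :
    entSeq (fun i : Fin k => p (Fin.castLE h i)) ≤ entSeq p := by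
  unfold entSeq
  apply mul_le_mul_of_nonneg_left _ (by norm_num : (0:ℝ) ≤ 1/2)
  have hterm : ∀ i : Fin k,
      ((p (Fin.castLE h i)).2 - (prevPt (fun j => p (Fin.castLE h j)) i).2) ^ 2 /
        ((p (Fin.castLE h i)).1 - (prevPt (fun j => p (Fin.castLE h j)) i).1)
      = ((p (Fin.castLE h i)).2 - (prevPt p (Fin.castLE h i)).2) ^ 2 /
        ((p (Fin.castLE h i)).1 - (prevPt p (Fin.castLE h i)).1) := by
    intro i; rw [prevPt_comp_castLE h p i]
  calc ∑ i : Fin k, ((p (Fin.castLE h i)).2 - (prevPt (fun j => p (Fin.castLE h j)) i).2) ^ 2 /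
        ((p (Fin.castLE h i)).1 - (prevPt (fun j => p (Fin.castLE h j)) i).1)
      = ∑ i : Fin k, ((p (Fin.castLE h i)).2 - (prevPt p (Fin.castLE h i)).2) ^ 2 /
        ((p (Fin.castLE h i)).1 - (prevPt p (Fin.castLE h i)).1) :=
        Finset.sum_congr rfl fun i _ => hterm i
    _ = ∑ j ∈ Finset.univ.map (Fin.castLEEmb h),
          ((p j).2 - (prevPt p j).2) ^ 2 / ((p j).1 - (prevPt p j).1) := by
        rw [Finset.sum_map]; rfl
    _ ≤ ∑ j : Fin n, ((p j).2 - (prevPt p j).2) ^ 2 / ((p j).1 - (prevPt p j).1) := by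
        apply Finset.sum_le_sum_of_subset_of_nonneg (Finset.subset_univ _)
        intro j _ _
        exact entSeq_term_nonneg p hpos hmono j

lemma exists_good_tuple {B : ℝ} (hB : 0 < B) {m : ℕ} (pts : Fin m → ℝ × ℝ) {k : ℕ}
    (hk : k ≤ elppC B pts) :
    ∃ f : Fin k → Fin m, Function.Injective f ∧
      (∀ i, 0 < (pts (f i)).1) ∧ StrictMono (fun i => (pts (f i)).1) ∧
      entSeq (fun i => pts (f i)) ≤ B := by
  classical
  set S := {k : ℕ | ∃ f : Fin k → Fin m, Function.Injective f ∧
    (∀ i, 0 < (pts (f i)).1) ∧ StrictMono (fun i => (pts (f i)).1) ∧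
    entSeq (fun i => pts (f i)) ≤ B} with hS
  have hne : S.Nonempty := by
    refine ⟨0, fun i => i.elim0, fun a => a.elim0, fun i => i.elim0, ?_, ?_⟩
    · intro a; exact a.elim0
    · unfold entSeq; simp; linarith
  have hbdd : BddAbove S := by
    refine ⟨m, fun j hj => ?_⟩
    obtain ⟨f, hf, -⟩ := hj
    simpa using Fintype.card_le_of_injective f hf
  have hmem : elppC B pts ∈ S := Nat.sSup_mem hne hbdd
  obtain ⟨f, hfinj, hfpos, hfmono, hfent⟩ := hmem
  refine ⟨f ∘ Fin.castLE hk, hfinj.comp (Fin.castLE_injective hk), ?_, ?_, ?_⟩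
  · intro i; exact hfpos _
  · exact fun i j hij => hfmono (by simpa using hij)
  · exact le_trans (entSeq_comp_castLE_le hk (fun i => pts (f i)) hfpos hfmono) hfent

lemma sum_abs_diff_le {k : ℕ} (hk : 0 < k) {t B : ℝ} (ht : 0 < t) (hB : 0 < B)
    (p : Fin k → ℝ × ℝ)
    (hple : ∀ i, (p i).1 ≤ t) (hpos : ∀ i, 0 < (p i).1)
    (hmono : StrictMono fun i => (p i).1) (hent : entSeq p ≤ B) :
    ∑ i, |(p i).2 - prevR (fun j => (p j).2) i| ≤ Real.sqrt (2 * B * t) := by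
  set a : Fin k → ℝ := fun i => (p i).2 - (prevPt p i).2 with ha
  set s : Fin k → ℝ := fun i => (p i).1 - (prevPt p i).1 with hs
  have hspos : ∀ i, 0 < s i := fun i => denom_pos p hpos hmono i
  have hsum_s : ∑ i, s i ≤ t := by
    have := sum_sub_prevR hk (fun j => (p j).1)
    have heq : ∑ i, s i = ∑ i, ((fun j => (p j).1) i - prevR (fun j => (p j).1) i) := by
      apply Finset.sum_congr rfl
      intro i _
      simp only [hs, prevPt_fst]
    rw [heq, this]
    exact hple _
  have hsum_ent : ∑ i, a i ^ 2 / s i ≤ 2 * B := by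
    have : (1/2 : ℝ) * ∑ i, a i ^ 2 / s i ≤ B := hent
    linarith
  have hcs : (∑ i, |a i|) ^ 2 ≤ (∑ i, a i ^ 2 / s i) * (∑ i, s i) := by
    have h1 : ∀ i : Fin k, |a i| = (|a i| / Real.sqrt (s i)) * Real.sqrt (s i) := by
      intro i
      rw [div_mul_cancel₀]
      exact ne_of_gt (Real.sqrt_pos.mpr (hspos i))
    have h2 : ∀ i : Fin k, (|a i| / Real.sqrt (s i)) ^ 2 = a i ^ 2 / s i := by
      intro i
      rw [div_pow, sq_abs, Real.sq_sqrt (le_of_lt (hspos i))]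
    have h3 : ∀ i : Fin k, (Real.sqrt (s i)) ^ 2 = s i := fun i =>
      Real.sq_sqrt (le_of_lt (hspos i))
    calc (∑ i, |a i|) ^ 2
        = (∑ i, (|a i| / Real.sqrt (s i)) * Real.sqrt (s i)) ^ 2 := by
          congr 1; exact Finset.sum_congr rfl fun i _ => h1 i
      _ ≤ (∑ i, (|a i| / Real.sqrt (s i)) ^ 2) * (∑ i, (Real.sqrt (s i)) ^ 2) :=
          Finset.sum_mul_sq_le_sq_mul_sq _ _ _
      _ = (∑ i, a i ^ 2 / s i) * (∑ i, s i) := by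
          congr 1
          · exact Finset.sum_congr rfl fun i _ => h2 i
          · exact Finset.sum_congr rfl fun i _ => h3 i
  have hfinal : (∑ i, |a i|) ^ 2 ≤ 2 * B * t := by
    calc (∑ i, |a i|) ^ 2 ≤ (∑ i, a i ^ 2 / s i) * (∑ i, s i) := hcs
      _ ≤ (2 * B) * t := by
          apply mul_le_mul hsum_ent hsum_s
          · exact Finset.sum_nonneg fun i _ => le_of_lt (hspos i)
          · linarith
  have heq2 : ∑ i, |(p i).2 - prevR (fun j => (p j).2) i| = ∑ i, |a i| := by
    apply Finset.sum_congr rfl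
    intro i _
    simp only [ha, prevPt_snd]
  rw [heq2]
  exact (Real.le_sqrt (Finset.sum_nonneg fun i _ => abs_nonneg _)
    (by positivity)).mpr hfinal

/-- The difference matrix. -/
def diffMat (k : ℕ) : Matrix (Fin k) (Fin k) ℝ :=
  fun i j => if j = i then 1 else if (j : ℕ) + 1 = (i : ℕ) then -1 else 0

lemma diffMat_mulVec {k : ℕ} (v : Fin k → ℝ) (i : Fin k) :
    (diffMat k).mulVec v i = v i - prevR v i := by
  classical
  have : (diffMat k).mulVec v i = ∑ j, diffMat k i j * v j := by
    simp [Matrix.mulVec, dotProduct]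
  rw [this]
  have hsplit : ∀ j : Fin k, diffMat k i j * v j =
      (if j = i then v j else 0) + (if (j : ℕ) + 1 = (i : ℕ) then -v j else 0) := by
    intro j
    unfold diffMat
    by_cases h1 : j = i
    · have h2 : ¬((j : ℕ) + 1 = (i : ℕ)) := by subst h1; omega
      simp [h1, h2]
    · by_cases h2 : (j : ℕ) + 1 = (i : ℕ)
      · simp [h1, h2]
      · simp [h1, h2]
  rw [Finset.sum_congr rfl fun j _ => hsplit j, Finset.sum_add_distrib,
    Finset.sum_ite_eq' Finset.univ i v, if_pos (Finset.mem_univ i)]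
  congr 1
  unfold prevR
  by_cases h0 : (i : ℕ) = 0
  · rw [if_pos h0]
    rw [Finset.sum_eq_zero]
    · ring
    · intro j _
      rw [if_neg (by omega)]
  · rw [if_neg h0]
    have hcond : ∀ j : Fin k, ((j : ℕ) + 1 = (i : ℕ)) ↔
        j = ⟨(i : ℕ) - 1, lt_of_le_of_lt (Nat.sub_le _ _) i.isLt⟩ := by
      intro j
      constructor
      · intro h; exact Fin.ext (by simp; omega)
      · intro h; subst h; simp; omega
    calc ∑ j : Fin k, (if (j : ℕ) + 1 = (i : ℕ) then -v j else 0)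
        = ∑ j : Fin k, (if j = ⟨(i : ℕ) - 1, lt_of_le_of_lt (Nat.sub_le _ _) i.isLt⟩ then -v j else 0) :=
          Finset.sum_congr rfl fun j _ => by rw [if_congr (hcond j) rfl rfl]
      _ = -v ⟨(i : ℕ) - 1, lt_of_le_of_lt (Nat.sub_le _ _) i.isLt⟩ := by
          rw [Finset.sum_ite_eq' Finset.univ _ (fun j => -v j), if_pos (Finset.mem_univ _)]

lemma diffMat_det {k : ℕ} : (diffMat k).det = 1 := by
  have hbt : (diffMat k).BlockTriangular (OrderDual.toDual : Fin k → (Fin k)ᵒᵈ) := by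
    intro i j h
    have hij : i < j := h
    have hval : (i : ℕ) < (j : ℕ) := hij
    unfold diffMat
    rw [if_neg (by exact fun hji => absurd (hji ▸ hij) (lt_irrefl _)),
      if_neg (by omega)]
  rw [Matrix.det_of_lowerTriangular (diffMat k) hbt]
  have : ∀ i : Fin k, diffMat k i i = 1 := by intro i; simp [diffMat]
  simp [this]

lemma volume_l1_ball {k : ℕ} (hk : 0 < k) (c : ℝ) :
    volume {w : Fin k → ℝ | ∑ i, |w i| ≤ c}
      = ENNReal.ofReal c ^ k * ENNReal.ofReal (2 ^ k / (Nat.factorial k : ℝ)) := by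
  haveI : Nonempty (Fin k) := ⟨⟨0, hk⟩⟩
  have h := MeasureTheory.volume_sum_rpow_le (Fin k) (le_refl (1:ℝ)) c
  have hset : {x : Fin k → ℝ | (∑ i, |x i| ^ (1:ℝ)) ^ (1/(1:ℝ)) ≤ c}
      = {w : Fin k → ℝ | ∑ i, |w i| ≤ c} := by
    ext w
    simp [Real.rpow_one]
  rw [hset] at h
  rw [h, Fintype.card_fin]
  congr 2
  norm_num
  rw [Real.Gamma_nat_eq_factorial]

lemma volume_budget {k : ℕ} (hk : 0 < k) (c : ℝ) :
    volume {v : Fin k → ℝ | ∑ i, |v i - prevR v i| ≤ c}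
      = ENNReal.ofReal c ^ k * ENNReal.ofReal (2 ^ k / (Nat.factorial k : ℝ)) := by
  classical
  set D : (Fin k → ℝ) →ₗ[ℝ] (Fin k → ℝ) := Matrix.toLin' (diffMat k) with hD
  have hdet : LinearMap.det D = 1 := by
    rw [hD, LinearMap.det_toLin', diffMat_det]
  have hpre : {v : Fin k → ℝ | ∑ i, |v i - prevR v i| ≤ c}
      = D ⁻¹' {w : Fin k → ℝ | ∑ i, |w i| ≤ c} := by
    ext v
    simp only [Set.mem_preimage, Set.mem_setOf_eq, hD, Matrix.toLin'_apply]
    constructor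
    · intro hv
      calc ∑ i, |(diffMat k).mulVec v i| = ∑ i, |v i - prevR v i| := by
            exact Finset.sum_congr rfl fun i _ => by rw [diffMat_mulVec]
        _ ≤ c := hv
    · intro hv
      calc ∑ i, |v i - prevR v i| = ∑ i, |(diffMat k).mulVec v i| := by
            exact Finset.sum_congr rfl fun i _ => by rw [diffMat_mulVec]
        _ ≤ c := hv
  rw [hpre, Measure.addHaar_preimage_linearMap volume (by rw [hdet]; norm_num),
    hdet, volume_l1_ball hk c]
  norm_num

lemma pi_cond_eq {k : ℕ} (I : Set ℝ) (hI : MeasurableSet I) (h0 : volume I ≠ 0)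
    (hT : volume I ≠ ⊤) :
    Measure.pi (fun _ : Fin k => (volume : Measure ℝ)[|I])
      = ((volume I)⁻¹) ^ k • volume.restrict (Set.univ.pi fun _ : Fin k => I) := by
  haveI : ∀ _i : Fin k, IsProbabilityMeasure ((volume : Measure ℝ)[|I]) :=
    fun _ => cond_isProbabilityMeasure_of_finite h0 hT
  apply Measure.pi_eq
  intro s hs
  rw [Measure.smul_apply, Measure.restrict_apply (MeasurableSet.univ_pi hs)]
  have hinter : (Set.univ.pi s) ∩ (Set.univ.pi fun _ : Fin k => I)
      = Set.univ.pi (fun i => s i ∩ I) := (Set.pi_inter_distrib).symm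
  rw [hinter, volume_pi, Measure.pi_pi]
  have : ∀ i : Fin k, (volume : Measure ℝ)[|I] (s i) = (volume I)⁻¹ * volume (s i ∩ I) := by
    intro i
    rw [cond_apply hI, Set.inter_comm]
  rw [Finset.prod_congr rfl fun i _ => this i, Finset.prod_mul_distrib, Finset.prod_const,
    Finset.card_univ, Fintype.card_fin, smul_eq_mul]

lemma pi_cond_apply_le {k : ℕ} (I : Set ℝ) (hI : MeasurableSet I) (h0 : volume I ≠ 0)
    (hT : volume I ≠ ⊤) (S : Set (Fin k → ℝ)) :
    Measure.pi (fun _ : Fin k => (volume : Measure ℝ)[|I]) S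
      ≤ ((volume I)⁻¹) ^ k * volume S := by
  rw [pi_cond_eq I hI h0 hT, Measure.smul_apply, smul_eq_mul]
  exact mul_le_mul_right (Measure.restrict_apply_le _ _) _

lemma map_tuple_eq_pi {Ω : Type} [MeasureSpace Ω] (R : Set (ℝ × ℝ)) (hR : MeasurableSet R)
    (h0 : volume R ≠ 0) (hT : volume R ≠ ⊤)
    {m k : ℕ} (hk : 0 < k) (Y : Fin m → Ω → ℝ × ℝ)
    (hind : iIndepFun Y ℙ)
    (hunif : ∀ i, pdf.IsUniform (Y i) R ℙ)
    (f : Fin k → Fin m) (hf : Function.Injective f) :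
    Measure.map (fun ω (i : Fin k) => Y (f i) ω) ℙ
      = Measure.pi (fun _ : Fin k => (volume : Measure (ℝ × ℝ))[|R]) := by
  classical
  haveI : ∀ _i : Fin k, IsProbabilityMeasure ((volume : Measure (ℝ × ℝ))[|R]) :=
    fun _ => cond_isProbabilityMeasure_of_finite h0 hT
  haveI : Nonempty (Fin k) := ⟨⟨0, hk⟩⟩
  have hYae : ∀ j, AEMeasurable (Y j) ℙ := fun j => (hunif j).aemeasurable h0 hT
  have htuple : AEMeasurable (fun ω (i : Fin k) => Y (f i) ω) ℙ := by
    refine ⟨fun ω i => (hYae (f i)).mk _ ω, measurable_pi_lambda _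
      (fun i => (hYae (f i)).measurable_mk), ?_⟩
    have hae : ∀ᵐ ω ∂ℙ, ∀ i : Fin k, Y (f i) ω = (hYae (f i)).mk _ ω :=
      MeasureTheory.ae_all_iff.mpr fun i => (hYae (f i)).ae_eq_mk
    filter_upwards [hae] with ω hω
    funext i
    exact hω i
  symm
  apply Measure.pi_eq
  intro s hs
  rw [Measure.map_apply_of_aemeasurable htuple (MeasurableSet.univ_pi hs)]
  have hinv : ∀ i, Function.invFun f (f i) = i := Function.leftInverse_invFun hf
  have hpre : (fun ω (i : Fin k) => Y (f i) ω) ⁻¹' (Set.univ.pi s)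
      = ⋂ j ∈ Finset.univ.image f, Y j ⁻¹' (s (Function.invFun f j)) := by
    ext ω
    simp only [Set.mem_preimage, Set.mem_univ_pi, Set.mem_iInter, Finset.mem_image,
      Finset.mem_univ, true_and]
    constructor
    · rintro h j ⟨i, rfl⟩
      rw [hinv]
      exact h i
    · intro h i
      have := h (f i) ⟨i, rfl⟩
      rwa [hinv] at this
  rw [hpre, hind.measure_inter_preimage_eq_mul (Finset.univ.image f)
    (sets := fun j => s (Function.invFun f j)) (fun j _ => hs _),
    Finset.prod_image (fun a _ b _ hab => hf hab)]
  apply Finset.prod_congr rfl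
  intro i _
  rw [hinv, ← Measure.map_apply_of_aemeasurable (hYae (f i)) (hs i), hunif (f i)]

lemma cond_rect_eq_prod {t x : ℝ} (ht : 0 < t) (hx : 0 < x) :
    (volume : Measure (ℝ × ℝ))[|Set.Icc 0 t ×ˢ Set.Icc (-x) x]
      = ((volume : Measure ℝ)[|Set.Icc 0 t]).prod ((volume : Measure ℝ)[|Set.Icc (-x) x]) := by
  have hI : MeasurableSet (Set.Icc (0:ℝ) t) := measurableSet_Icc
  have hJ : MeasurableSet (Set.Icc (-x) x) := measurableSet_Icc
  have hIv : volume (Set.Icc (0:ℝ) t) = ENNReal.ofReal t := by rw [Real.volume_Icc]; norm_num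
  have hJv : volume (Set.Icc (-x) x) = ENNReal.ofReal (2 * x) := by
    rw [Real.volume_Icc]; congr 1; ring
  have hI0 : volume (Set.Icc (0:ℝ) t) ≠ 0 := by
    rw [hIv]; simp [ENNReal.ofReal_eq_zero]; linarith
  have hIT : volume (Set.Icc (0:ℝ) t) ≠ ⊤ := by rw [hIv]; exact ENNReal.ofReal_ne_top
  have hJ0 : volume (Set.Icc (-x) x) ≠ 0 := by
    rw [hJv]; simp [ENNReal.ofReal_eq_zero]; linarith
  have hJT : volume (Set.Icc (-x) x) ≠ ⊤ := by rw [hJv]; exact ENNReal.ofReal_ne_top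
  haveI : IsProbabilityMeasure ((volume : Measure ℝ)[|Set.Icc 0 t]) :=
    cond_isProbabilityMeasure_of_finite hI0 hIT
  haveI : IsProbabilityMeasure ((volume : Measure ℝ)[|Set.Icc (-x) x]) :=
    cond_isProbabilityMeasure_of_finite hJ0 hJT
  have hRv : volume (Set.Icc (0:ℝ) t ×ˢ Set.Icc (-x) x)
      = volume (Set.Icc (0:ℝ) t) * volume (Set.Icc (-x) x) := by
    rw [Measure.volume_eq_prod, Measure.prod_prod]
  symm
  apply Measure.prod_eq
  intro s u hs hu
  rw [cond_apply (hI.prod hJ), cond_apply hI, cond_apply hJ, hRv]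
  have hinter : (Set.Icc (0:ℝ) t ×ˢ Set.Icc (-x) x) ∩ (s ×ˢ u)
      = (Set.Icc (0:ℝ) t ∩ s) ×ˢ (Set.Icc (-x) x ∩ u) := by
    rw [Set.prod_inter_prod]
  rw [hinter]
  have : volume ((Set.Icc (0:ℝ) t ∩ s) ×ˢ (Set.Icc (-x) x ∩ u))
      = volume (Set.Icc (0:ℝ) t ∩ s) * volume (Set.Icc (-x) x ∩ u) := by
    rw [Measure.volume_eq_prod, Measure.prod_prod]
  rw [this, ENNReal.mul_inv (Or.inl hI0) (Or.inl hIT)]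
  ring


lemma tuple_aemeasurable {Ω : Type} [MeasureSpace Ω] {m k : ℕ} (Y : Fin m → Ω → ℝ × ℝ)
    (hYae : ∀ j, AEMeasurable (Y j) (ℙ : Measure Ω)) (f : Fin k → Fin m) :
    AEMeasurable (fun ω (i : Fin k) => Y (f i) ω) ℙ := by
  refine ⟨fun ω i => (hYae (f i)).mk _ ω, measurable_pi_lambda _
    (fun i => (hYae (f i)).measurable_mk), ?_⟩
  have hae : ∀ᵐ ω ∂(ℙ : Measure Ω), ∀ i : Fin k, Y (f i) ω = (hYae (f i)).mk _ ω :=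
    MeasureTheory.ae_all_iff.mpr fun i => (hYae (f i)).ae_eq_mk
  filter_upwards [hae] with ω hω
  funext i
  exact hω i

section PerF

variable {Ω : Type} [MeasureSpace Ω]

lemma measurableSet_T {k : ℕ} (t : ℝ) :
    MeasurableSet {u : Fin k → ℝ | (∀ i, u i ∈ Set.Icc 0 t) ∧ StrictMono u} := by
  have h1 : MeasurableSet {u : Fin k → ℝ | ∀ i, u i ∈ Set.Icc 0 t} := by
    have e : {u : Fin k → ℝ | ∀ i, u i ∈ Set.Icc 0 t}
        = ⋂ i, (fun u : Fin k → ℝ => u i) ⁻¹' Set.Icc 0 t := by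
      ext u; simp
    rw [e]
    exact MeasurableSet.iInter fun i => (measurable_pi_apply i) measurableSet_Icc
  have h2 : MeasurableSet {u : Fin k → ℝ | StrictMono u} := by
    have e : {u : Fin k → ℝ | StrictMono u} = ⋂ (i : Fin k) (j : Fin k),
        {u : Fin k → ℝ | i < j → u i < u j} := by
      ext u
      simp only [Set.mem_setOf_eq, Set.mem_iInter]
      exact ⟨fun h i j hij => h hij, fun h a b hab => h a b hab⟩
    rw [e]
    refine MeasurableSet.iInter fun i => MeasurableSet.iInter fun j => ?_
    by_cases hij : i < j
    · have e2 : {u : Fin k → ℝ | i < j → u i < u j} = {u : Fin k → ℝ | u i < u j} := by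
        ext u; simp [hij]
      rw [e2]
      exact measurableSet_lt (measurable_pi_apply i) (measurable_pi_apply j)
    · have e2 : {u : Fin k → ℝ | i < j → u i < u j} = Set.univ := by
        ext u; simp [hij]
      rw [e2]
      exact MeasurableSet.univ
  exact MeasurableSet.inter h1 h2

lemma measurableSet_X {k : ℕ} (r : ℝ) :
    MeasurableSet {v : Fin k → ℝ | ∑ i, |v i - prevR v i| ≤ r} := by
  have hmeas : Measurable fun v : Fin k → ℝ => ∑ i, |v i - prevR v i| := by
    apply Finset.measurable_sum
    intro i _
    apply Measurable.abs
    apply Measurable.sub (measurable_pi_apply i)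
    unfold prevR
    split
    · exact measurable_const
    · exact measurable_pi_apply _
  exact measurableSet_le hmeas measurable_const

lemma T_subset_budget {k : ℕ} (hk : 0 < k) (t : ℝ) :
    {u : Fin k → ℝ | (∀ i, u i ∈ Set.Icc 0 t) ∧ StrictMono u}
      ⊆ {u : Fin k → ℝ | ∑ i, |u i - prevR u i| ≤ t} := by
  rintro u ⟨hIcc, hmono⟩
  have hd : ∀ i, 0 ≤ u i - prevR u i := by
    intro i
    unfold prevR
    split
    · simpa using (hIcc i).1
    · rename_i h0
      have hlt : (⟨(i : ℕ) - 1, lt_of_le_of_lt (Nat.sub_le _ _) i.isLt⟩ : Fin k) < i := by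
        rw [Fin.lt_def]; simp; omega
      have := hmono hlt
      linarith
  have : ∑ i, |u i - prevR u i| = ∑ i, (u i - prevR u i) :=
    Finset.sum_congr rfl fun i _ => abs_of_nonneg (hd i)
  rw [Set.mem_setOf_eq, this, sum_sub_prevR hk u]
  exact (hIcc _).2

lemma per_f_bound [IsProbabilityMeasure (ℙ : Measure Ω)]
    {t x B : ℝ} (ht : 0 < t) (hx : 0 < x) (hB : 0 < B)
    {m k : ℕ} (hk : 0 < k) (Y : Fin m → Ω → ℝ × ℝ)
    (hind : iIndepFun Y ℙ)
    (hunif : ∀ i, pdf.IsUniform (Y i) (Set.Icc 0 t ×ˢ Set.Icc (-x) x) ℙ)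
    (f : Fin k → Fin m) (hf : Function.Injective f) :
    ℙ {ω | (∀ i, 0 < (Y (f i) ω).1) ∧ StrictMono (fun i => (Y (f i) ω).1) ∧
        entSeq (fun i => Y (f i) ω) ≤ B}
      ≤ ENNReal.ofReal ((2 ^ k / (Nat.factorial k : ℝ)) * (2 ^ k / (Nat.factorial k : ℝ)) *
          (Real.sqrt (2 * B * t) / (2 * x)) ^ k) := by
  classical
  set R : Set (ℝ × ℝ) := Set.Icc 0 t ×ˢ Set.Icc (-x) x with hRdef
  have hI : MeasurableSet (Set.Icc (0:ℝ) t) := measurableSet_Icc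
  have hJ : MeasurableSet (Set.Icc (-x) x) := measurableSet_Icc
  have hR : MeasurableSet R := hI.prod hJ
  have hIv : volume (Set.Icc (0:ℝ) t) = ENNReal.ofReal t := by rw [Real.volume_Icc]; norm_num
  have hJv : volume (Set.Icc (-x) x) = ENNReal.ofReal (2 * x) := by
    rw [Real.volume_Icc]; congr 1; ring
  have hI0 : volume (Set.Icc (0:ℝ) t) ≠ 0 := by
    rw [hIv]; simp [ENNReal.ofReal_eq_zero]; linarith
  have hIT : volume (Set.Icc (0:ℝ) t) ≠ ⊤ := by rw [hIv]; exact ENNReal.ofReal_ne_top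
  have hJ0 : volume (Set.Icc (-x) x) ≠ 0 := by
    rw [hJv]; simp [ENNReal.ofReal_eq_zero]; linarith
  have hJT : volume (Set.Icc (-x) x) ≠ ⊤ := by rw [hJv]; exact ENNReal.ofReal_ne_top
  have hRv : volume R = volume (Set.Icc (0:ℝ) t) * volume (Set.Icc (-x) x) := by
    rw [hRdef, Measure.volume_eq_prod, Measure.prod_prod]
  have hR0 : volume R ≠ 0 := by rw [hRv]; exact mul_ne_zero hI0 hJ0
  have hRT : volume R ≠ ⊤ := by rw [hRv]; exact ENNReal.mul_ne_top hIT hJT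
  set r : ℝ := Real.sqrt (2 * B * t) with hr
  set T : Set (Fin k → ℝ) := {u | (∀ i, u i ∈ Set.Icc 0 t) ∧ StrictMono u} with hT
  set X : Set (Fin k → ℝ) := {v | ∑ i, |v i - prevR v i| ≤ r} with hX
  have hTmeas : MeasurableSet T := measurableSet_T t
  have hXmeas : MeasurableSet X := measurableSet_X r
  set E : Set Ω := {ω | (∀ i, 0 < (Y (f i) ω).1) ∧ StrictMono (fun i => (Y (f i) ω).1) ∧
      entSeq (fun i => Y (f i) ω) ≤ B} with hE
  set G : Set Ω := ⋂ j : Fin m, Y j ⁻¹' R with hG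
  have hYae : ∀ j, AEMeasurable (Y j) ℙ := fun j => (hunif j).aemeasurable hR0 hRT
  have hGc : ℙ Gᶜ = 0 := by
    rw [hG, Set.compl_iInter]
    refine le_antisymm (le_trans (measure_iUnion_fintype_le _ _) ?_) zero_le
    have : ∀ j : Fin m, ℙ (Y j ⁻¹' R)ᶜ = 0 := by
      intro j
      have : (Y j ⁻¹' R)ᶜ = Y j ⁻¹' Rᶜ := rfl
      rw [this, ← Measure.map_apply_of_aemeasurable (hYae j) hR.compl, hunif j,
        cond_apply hR, Set.inter_compl_self, measure_empty, mul_zero]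
    rw [Finset.sum_congr rfl fun j _ => this j]
    simp
  -- the image set under the equivalence
  set equiv := MeasurableEquiv.arrowProdEquivProdArrow ℝ ℝ (Fin k) with hequiv
  set A : Set (Fin k → ℝ × ℝ) := equiv ⁻¹' (T ×ˢ X) with hA
  have hAmeas : MeasurableSet A := equiv.measurable (hTmeas.prod hXmeas)
  -- inclusion
  have hincl : E ∩ G ⊆ (fun ω (i : Fin k) => Y (f i) ω) ⁻¹' A := by
    rintro ω ⟨⟨hpos, hmono, hent⟩, hGω⟩
    have hmem : ∀ i : Fin k, Y (f i) ω ∈ R := by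
      intro i
      have := Set.mem_iInter.mp hGω (f i)
      exact this
    set p : Fin k → ℝ × ℝ := fun i => Y (f i) ω with hp
    have h1 : (fun i => p i) ∈ A := by
      rw [hA, Set.mem_preimage]
      have hpair : equiv (fun i => p i) = (fun i => (p i).1, fun i => (p i).2) := rfl
      rw [hpair, Set.mem_prod]
      constructor
      · constructor
        · intro i
          have := hmem i
          rw [hRdef] at this
          exact this.1
        · exact hmono
      · show (fun i => (p i).2) ∈ X
        rw [hX, Set.mem_setOf_eq]
        have hple : ∀ i, (p i).1 ≤ t := by
          intro i
          have := hmem i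
          rw [hRdef] at this
          exact (this.1).2
        exact sum_abs_diff_le hk ht hB p hple hpos hmono hent
    exact h1
  calc ℙ E ≤ ℙ ((E ∩ G) ∪ Gᶜ) := measure_mono (by
        intro ω hω
        by_cases hg : ω ∈ G
        · exact Or.inl ⟨hω, hg⟩
        · exact Or.inr hg)
    _ ≤ ℙ (E ∩ G) + ℙ Gᶜ := measure_union_le _ _
    _ = ℙ (E ∩ G) := by rw [hGc, add_zero]
    _ ≤ ℙ ((fun ω (i : Fin k) => Y (f i) ω) ⁻¹' A) := measure_mono hincl
    _ = Measure.map (fun ω (i : Fin k) => Y (f i) ω) ℙ A :=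
        (Measure.map_apply_of_aemeasurable (tuple_aemeasurable Y hYae f) hAmeas).symm
    _ = Measure.pi (fun _ : Fin k => (volume : Measure (ℝ × ℝ))[|R]) A := by
        rw [map_tuple_eq_pi R hR hR0 hRT hk Y hind hunif f hf]
    _ = ((Measure.pi fun _ : Fin k => (volume : Measure ℝ)[|Set.Icc 0 t]).prod
          (Measure.pi fun _ : Fin k => (volume : Measure ℝ)[|Set.Icc (-x) x])) (T ×ˢ X) := by
        haveI : IsProbabilityMeasure ((volume : Measure ℝ)[|Set.Icc 0 t]) :=
          cond_isProbabilityMeasure_of_finite hI0 hIT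
        haveI : IsProbabilityMeasure ((volume : Measure ℝ)[|Set.Icc (-x) x]) :=
          cond_isProbabilityMeasure_of_finite hJ0 hJT
        have hfa : (fun _ : Fin k => (volume : Measure (ℝ × ℝ))[|R])
            = fun _ : Fin k => ((volume : Measure ℝ)[|Set.Icc 0 t]).prod
                ((volume : Measure ℝ)[|Set.Icc (-x) x]) :=
          funext fun _ => cond_rect_eq_prod ht hx
        rw [hA, hfa]
        exact (measurePreserving_arrowProdEquivProdArrow ℝ ℝ (Fin k)
          (fun _ => (volume : Measure ℝ)[|Set.Icc 0 t])
          (fun _ => (volume : Measure ℝ)[|Set.Icc (-x) x])).measure_preimage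
          (hTmeas.prod hXmeas).nullMeasurableSet
    _ = (Measure.pi fun _ : Fin k => (volume : Measure ℝ)[|Set.Icc 0 t]) T *
          (Measure.pi fun _ : Fin k => (volume : Measure ℝ)[|Set.Icc (-x) x]) X := by
        haveI : IsProbabilityMeasure ((volume : Measure ℝ)[|Set.Icc (-x) x]) :=
          cond_isProbabilityMeasure_of_finite hJ0 hJT
        haveI : ∀ _i : Fin k, IsProbabilityMeasure ((volume : Measure ℝ)[|Set.Icc (-x) x]) :=
          fun _ => inferInstance
        exact Measure.prod_prod T X
    _ ≤ (((volume (Set.Icc (0:ℝ) t))⁻¹) ^ k * volume {u : Fin k → ℝ | ∑ i, |u i - prevR u i| ≤ t}) *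
          (((volume (Set.Icc (-x) x))⁻¹) ^ k * volume X) := by
        apply mul_le_mul'
        · exact le_trans (pi_cond_apply_le _ hI hI0 hIT T)
            (mul_le_mul_right (measure_mono (T_subset_budget hk t)) _)
        · exact pi_cond_apply_le _ hJ hJ0 hJT X
    _ ≤ ENNReal.ofReal ((2 ^ k / (Nat.factorial k : ℝ)) * (2 ^ k / (Nat.factorial k : ℝ)) *
          (Real.sqrt (2 * B * t) / (2 * x)) ^ k) := by
        rw [hIv, hJv, volume_budget hk t, hX, volume_budget hk r]
        set c2 : ℝ≥0∞ := ENNReal.ofReal (2 ^ k / (Nat.factorial k : ℝ)) with hc2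
        have ht0 : ENNReal.ofReal t ≠ 0 := by simp [ENNReal.ofReal_eq_zero]; linarith
        have hx2 : (0:ℝ) < 2 * x := by linarith
        have hrnn : 0 ≤ r := Real.sqrt_nonneg _
        have ha : (ENNReal.ofReal t)⁻¹ ^ k * (ENNReal.ofReal t ^ k * c2) = c2 := by
          rw [← mul_assoc, ← mul_pow, ENNReal.inv_mul_cancel ht0 ENNReal.ofReal_ne_top,
            one_pow, one_mul]
        have hb : (ENNReal.ofReal (2 * x))⁻¹ ^ k * (ENNReal.ofReal r ^ k * c2)
            = ENNReal.ofReal ((r / (2 * x)) ^ k) * c2 := by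
          rw [← mul_assoc, ← mul_pow, ← ENNReal.ofReal_inv_of_pos hx2,
            ← ENNReal.ofReal_mul (by positivity : (0:ℝ) ≤ (2 * x)⁻¹),
            show (2 * x)⁻¹ * r = r / (2 * x) by ring,
            ← ENNReal.ofReal_pow (by positivity : (0:ℝ) ≤ r / (2 * x))]
        rw [ha, hb, hc2]
        rw [← ENNReal.ofReal_mul (by positivity : (0:ℝ) ≤ (r / (2 * x)) ^ k),
          ← ENNReal.ofReal_mul (by positivity : (0:ℝ) ≤ 2 ^ k / (Nat.factorial k : ℝ))]
        apply ENNReal.ofReal_le_ofReal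
        rw [hr]
        apply le_of_eq
        ring

end PerF

lemma final_real_ineq {t x B : ℝ} (ht : 0 < t) (hx : 0 < x) (hB : 0 < B)
    {m k : ℕ} (hm : 1 ≤ m) (hk : 1 ≤ k) :
    (m : ℝ) ^ k * ((2 ^ k / (Nat.factorial k : ℝ)) * (2 ^ k / (Nat.factorial k : ℝ)) *
      (Real.sqrt (2 * B * t) / (2 * x)) ^ k)
    ≤ (21 * (B * t / x ^ 2) ^ ((1 : ℝ) / 2) * m / k ^ 2) ^ k := by
  have hkf : (0:ℝ) < (Nat.factorial k : ℝ) := by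
    exact_mod_cast Nat.factorial_pos k
  have hkR : (0:ℝ) < (k:ℝ) := by exact_mod_cast hk
  have hmR : (0:ℝ) < (m:ℝ) := by exact_mod_cast hm
  have hBt : 0 < B * t := mul_pos hB ht
  set s : ℝ := Real.sqrt (B * t) / x with hs
  have hspos : 0 < s := div_pos (Real.sqrt_pos.mpr hBt) hx
  have hrpow : (B * t / x ^ 2) ^ ((1 : ℝ) / 2) = s := by
    rw [← Real.sqrt_eq_rpow, hs, Real.sqrt_div hBt.le, Real.sqrt_sq hx.le]
  have hsqrt2 : Real.sqrt (2 * B * t) = Real.sqrt 2 * Real.sqrt (B * t) := by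
    rw [show 2 * B * t = 2 * (B * t) by ring, Real.sqrt_mul (by norm_num) _]
  have hL : (m : ℝ) ^ k * ((2 ^ k / (Nat.factorial k : ℝ)) * (2 ^ k / (Nat.factorial k : ℝ)) *
      (Real.sqrt (2 * B * t) / (2 * x)) ^ k)
      = (2 * Real.sqrt 2 * s * m) ^ k / ((Nat.factorial k : ℝ)) ^ 2 := by
    rw [hsqrt2, hs]
    simp only [div_pow, mul_pow]
    field_simp
  have hR : (21 * (B * t / x ^ 2) ^ ((1 : ℝ) / 2) * m / k ^ 2) ^ k
      = (21 * s * m) ^ k / (((k : ℝ)) ^ k) ^ 2 := by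
    rw [hrpow, div_pow]
    congr 1
    rw [← pow_mul, ← pow_mul, Nat.mul_comm]
  rw [hL, hR, div_le_div_iff₀ (by positivity) (by positivity)]
  have hkk : (k:ℝ) ^ k ≤ Real.exp 1 ^ k * (Nat.factorial k : ℝ) :=
    pow_self_le_exp_pow_factorial k
  have he : Real.exp 1 ≤ 2.7182818286 := le_of_lt Real.exp_one_lt_d9
  have hsq2 : Real.sqrt 2 ≤ 1.415 := by
    calc Real.sqrt 2 ≤ Real.sqrt (1.415 ^ 2) := Real.sqrt_le_sqrt (by norm_num)
      _ = 1.415 := Real.sqrt_sq (by norm_num)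
  have hbase : 2 * Real.sqrt 2 * (Real.exp 1) ^ 2 ≤ 21 := by
    nlinarith [Real.sqrt_nonneg 2, Real.exp_pos 1]
  calc (2 * Real.sqrt 2 * s * m) ^ k * (((k:ℝ)) ^ k) ^ 2
      ≤ (2 * Real.sqrt 2 * s * m) ^ k * (Real.exp 1 ^ k * (Nat.factorial k : ℝ)) ^ 2 := by
        apply mul_le_mul_of_nonneg_left _ (by positivity)
        exact pow_le_pow_left₀ (by positivity) hkk 2
    _ = ((2 * Real.sqrt 2 * (Real.exp 1) ^ 2) * s * m) ^ k * ((Nat.factorial k : ℝ)) ^ 2 := by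
        ring
    _ ≤ (21 * s * m) ^ k * ((Nat.factorial k : ℝ)) ^ 2 := by
        apply mul_le_mul_of_nonneg_right _ (by positivity)
        apply pow_le_pow_left₀ (by positivity)
        exact mul_le_mul_of_nonneg_right
          (mul_le_mul_of_nonneg_right hbase hspos.le) hmR.le


theorem stmt3 :
    ∃ C₀ : ℝ, 0 < C₀ ∧
      ∀ (Ω : Type) (_ : MeasureSpace Ω), IsProbabilityMeasure (ℙ : Measure Ω) →
        ∀ (t x B : ℝ), 0 < t → 0 < x → 0 < B →
          ∀ (m : ℕ), 1 ≤ m → ∀ (Y : Fin m → Ω → ℝ × ℝ),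
            iIndepFun Y ℙ →
            (∀ i, pdf.IsUniform (Y i) (Set.Icc 0 t ×ˢ Set.Icc (-x) x) ℙ) →
            ∀ (k : ℕ), 1 ≤ k → k ≤ m →
              ℙ {ω | k ≤ elppC B (fun i => Y i ω)}
                ≤ ENNReal.ofReal
                    ((C₀ * (B * t / x ^ 2) ^ ((1 : ℝ) / 2) * m / k ^ 2) ^ k) := by
  classical
  refine ⟨21, by norm_num, ?_⟩
  intro Ω _ hprob t x B ht hx hB m hm Y hind hunif k hk1 hkm
  haveI := hprob
  have hk : 0 < k := hk1
  set E : (Fin k → Fin m) → Set Ω := fun f =>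
    {ω | (∀ i, 0 < (Y (f i) ω).1) ∧ StrictMono (fun i => (Y (f i) ω).1) ∧
      entSeq (fun i => Y (f i) ω) ≤ B} with hEdef
  have hsub : {ω | k ≤ elppC B (fun i => Y i ω)} ⊆ ⋃ f : Fin k → Fin m, E f := by
    intro ω hω
    obtain ⟨f, hfinj, hfpos, hfmono, hfent⟩ :=
      exists_good_tuple hB (fun i => Y i ω) hω
    exact Set.mem_iUnion.mpr ⟨f, hfpos, hfmono, hfent⟩
  have hEempty : ∀ f : Fin k → Fin m, ¬Function.Injective f → E f = ∅ := by
    intro f hfn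
    obtain ⟨a, b, hab, hne⟩ := Function.not_injective_iff.mp hfn
    rw [Set.eq_empty_iff_forall_notMem]
    rintro ω ⟨hpos, hmono, hent⟩
    rcases hne.lt_or_gt with h | h
    · have := hmono h
      simp only [hab] at this
      exact lt_irrefl _ this
    · have := hmono h
      simp only [hab] at this
      exact lt_irrefl _ this
  set Q : ℝ≥0∞ := ENNReal.ofReal ((2 ^ k / (Nat.factorial k : ℝ)) *
    (2 ^ k / (Nat.factorial k : ℝ)) * (Real.sqrt (2 * B * t) / (2 * x)) ^ k) with hQ
  have hEf : ∀ f : Fin k → Fin m, ℙ (E f) ≤ Q := by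
    intro f
    by_cases hfin : Function.Injective f
    · exact per_f_bound ht hx hB hk Y hind hunif f hfin
    · rw [hEempty f hfin]; simp
  calc ℙ {ω | k ≤ elppC B (fun i => Y i ω)}
      ≤ ℙ (⋃ f : Fin k → Fin m, E f) := measure_mono hsub
    _ ≤ ∑ f : Fin k → Fin m, ℙ (E f) := measure_iUnion_fintype_le _ _
    _ ≤ (Finset.univ : Finset (Fin k → Fin m)).card • Q :=
        Finset.sum_le_card_nsmul _ _ _ (fun f _ => hEf f)
    _ = (m ^ k : ℕ) • Q := by
        rw [Finset.card_univ, Fintype.card_fun, Fintype.card_fin, Fintype.card_fin]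
    _ ≤ ENNReal.ofReal ((21 * (B * t / x ^ 2) ^ ((1 : ℝ) / 2) * m / k ^ 2) ^ k) := by
        rw [nsmul_eq_mul, hQ]
        rw [show ((m ^ k : ℕ) : ℝ≥0∞) = ENNReal.ofReal ((m : ℝ) ^ k) by
          rw [← ENNReal.ofReal_natCast]; norm_num]
        rw [← ENNReal.ofReal_mul (by positivity)]
        exact ENNReal.ofReal_le_ofReal (final_real_ineq ht hx hB hm hk1)
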